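/- Let D be a regular (216, 40, 4, 8)-PDS in the group G = (ℤ/2ℤ)³ × (ℤ/3ℤ)³ containing exactly 4 elements of order 2. For each element g ∈ G of order 3 let B_g denote the number of d ∈ D with d⁴ = g. Then the sum of B_g over all 26 elements g of order 3 equals 36, and the sum of B_g·(B_g − 1) over all such g equals 28. -/

import Mathlib

/-- The number of representations of `g` as `a * b⁻¹` with `a, b ∈ D`. -/
def diffReps {G : Type*} [Group G] [DecidableEq G] (D : Finset G) (g : G) : ℕ :=
  ((D ×ˢ D).filter (fun p => p.1 * p.2⁻¹ = g)).card

/-- `D` is a `(v, k, λ, μ)`-partial difference set in the finite group `G`. -/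
def IsPDS {G : Type*} [Group G] [Fintype G] [DecidableEq G]
    (D : Finset G) (v k l m : ℕ) : Prop :=
  Fintype.card G = v ∧ D.card = k ∧
  ∀ g : G, g ≠ 1 →
    (g ∈ D → diffReps D g = l) ∧ (g ∉ D → diffReps D g = m)

/-- `D` is regular: it does not contain the identity and is closed under inverses. -/
def IsRegularPDS {G : Type*} [Group G] (D : Finset G) : Prop :=
  (1 : G) ∉ D ∧ ∀ d : G, d ∈ D ↔ d⁻¹ ∈ D

/-- A regular PDS `D` is trivial if `D ∪ {e}` or `G \ D` is a subgroup of `G`. -/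
def IsTrivialPDS {G : Type*} [Group G] (D : Finset G) : Prop :=
  (∃ H : Subgroup G, (H : Set G) = insert (1 : G) ↑D) ∨
  (∃ H : Subgroup G, (H : Set G) = (↑D : Set G)ᶜ)

/-- The group `(ℤ/2ℤ)³ × (ℤ/3ℤ)³`, written multiplicatively. -/
abbrev G216 : Type := Multiplicative ((Fin 3 → ZMod 2) × (Fin 3 → ZMod 3))

set_option maxRecDepth 10000 in
lemma g216_pow_six : ∀ g : G216, g ^ 6 = 1 := by decide

set_option maxRecDepth 10000 in
lemma g216_pow_four : ∀ g : G216, g ^ 4 = 1 ↔ g ^ 2 = 1 := by decide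

lemma g216_invol_card :
    (Finset.univ.filter (fun g : G216 => g ^ 2 = 1 ∧ g ≠ 1)).card = 7 := by decide

/-- For a regular `(216,40,4,8)`-PDS `D` in `(ℤ/2ℤ)³ × (ℤ/3ℤ)³` with exactly 4
elements of order 2, writing `B g = #{d ∈ D | d⁴ = g}` for each element `g` of
order 3, one has `∑ B g = 36` and `∑ B g (B g - 1) = 28`. -/
theorem fiber_count_equations_four_involutions (D : Finset G216)
    (hD : IsPDS D 216 40 4 8) (hreg : IsRegularPDS D)
    (h2 : (D.filter (fun d => orderOf d = 2)).card = 4) :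
    (∑ g ∈ Finset.univ.filter (fun g : G216 => orderOf g = 3),
        (D.filter (fun d => d ^ 4 = g)).card) = 36 ∧
    (∑ g ∈ Finset.univ.filter (fun g : G216 => orderOf g = 3),
        (D.filter (fun d => d ^ 4 = g)).card *
          ((D.filter (fun d => d ^ 4 = g)).card - 1)) = 28 := by
  haveI : Fact (Nat.Prime 2) := ⟨by norm_num⟩
  haveI : Fact (Nat.Prime 3) := ⟨by norm_num⟩
  classical
  obtain ⟨-, hcard, hlm⟩ := hD
  -- basic order facts
  have hord3 : ∀ d : G216, d ^ 2 ≠ 1 → orderOf (d ^ 4) = 3 := by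
    intro d hd
    refine orderOf_eq_prime ?_ ?_
    · rw [← pow_mul, show 4 * 3 = 6 * 2 from rfl, pow_mul, g216_pow_six, one_pow]
    · intro h; exact hd ((g216_pow_four d).mp h)
  have hord2 : ∀ d : G216, d ∈ D → (d ^ 2 = 1 ↔ orderOf d = 2) := by
    intro d hd
    constructor
    · intro h
      exact orderOf_eq_prime h (fun h1 => hreg.1 (h1 ▸ hd))
    · intro h
      have h' := pow_orderOf_eq_one d
      rwa [h] at h'
  set S3 : Finset G216 := Finset.univ.filter (fun g : G216 => orderOf g = 3) with hS3
  have hS3mem : ∀ g : G216, g ∈ S3 ↔ orderOf g = 3 := by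
    intro g; simp [hS3]
  -- the set of elements of D whose 4th power has order 3
  set D3 : Finset G216 := D.filter (fun d => ¬ d ^ 2 = 1) with hD3
  have hD3card : D3.card = 36 := by
    have hsplit : (D.filter (fun d => d ^ 2 = 1)).card + D3.card = D.card := by
      rw [hD3]
      exact Finset.card_filter_add_card_filter_not (p := fun d => d ^ 2 = 1)
    have heq : D.filter (fun d => d ^ 2 = 1) = D.filter (fun d => orderOf d = 2) := by
      apply Finset.filter_congr
      intro d hd; simp [hord2 d hd]
    rw [heq, h2, hcard] at hsplit
    omega
  -- fiber identification for the first sum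
  have hfib1 : ∀ g ∈ S3, D.filter (fun d => d ^ 4 = g)
      = D3.filter (fun d => d ^ 4 = g) := by
    intro g hg
    rw [hS3mem] at hg
    ext d
    simp only [hD3, Finset.mem_filter, and_assoc]
    constructor
    · rintro ⟨hd, h4⟩
      refine ⟨hd, ?_, h4⟩
      intro h2'
      have : d ^ 4 = 1 := (g216_pow_four d).mpr h2'
      rw [h4] at this
      rw [this] at hg
      simp at hg
    · rintro ⟨hd, -, h4⟩; exact ⟨hd, h4⟩
  have hsum1 : (∑ g ∈ S3, (D.filter (fun d => d ^ 4 = g)).card) = 36 := by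
    rw [Finset.sum_congr rfl (fun g hg => by rw [hfib1 g hg])]
    rw [← Finset.card_eq_sum_card_fiberwise (f := fun d => d ^ 4) (t := S3)]
    · exact hD3card
    · intro d hd
      rw [Finset.mem_coe, hS3mem]
      exact hord3 d (by simpa [hD3] using (Finset.mem_filter.mp hd).2)
  refine ⟨hsum1, ?_⟩
  -- second sum
  set T : Finset G216 := Finset.univ.filter (fun g : G216 => g ^ 2 = 1 ∧ g ≠ 1) with hT
  have hTmem : ∀ g : G216, g ∈ T ↔ g ^ 2 = 1 ∧ g ≠ 1 := by intro g; simp [hT]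
  set Q : Finset (G216 × G216) :=
    (D ×ˢ D).filter (fun p => p.1 ≠ p.2 ∧ p.1 ^ 2 = p.2 ^ 2) with hQ
  have hQmem : ∀ p : G216 × G216, p ∈ Q ↔
      p.1 ∈ D ∧ p.2 ∈ D ∧ p.1 ≠ p.2 ∧ p.1 ^ 2 = p.2 ^ 2 := by
    intro p; simp [hQ, Finset.mem_filter, Finset.mem_product, and_assoc]
  -- Q.card = 40 via difference counting over involutions
  have hQcard : Q.card = 40 := by
    have hmap : ∀ p ∈ Q, p.1 * p.2⁻¹ ∈ T := by
      intro p hp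
      rw [hQmem] at hp
      obtain ⟨h1, h2', hne, hsq⟩ := hp
      rw [hTmem]
      constructor
      · have : (p.1 * p.2⁻¹) ^ 2 = p.1 ^ 2 * (p.2 ^ 2)⁻¹ := by
          rw [mul_pow, inv_pow]
        rw [this, hsq, mul_inv_cancel]
      · intro h; exact hne (by rwa [mul_inv_eq_one] at h)
    have := Finset.card_eq_sum_card_fiberwise hmap
    rw [this]
    have hfib : ∀ t ∈ T, (Q.filter (fun p => p.1 * p.2⁻¹ = t)).card = diffReps D t := by
      intro t ht
      rw [hTmem] at ht
      congr 1
      ext p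
      simp only [hQmem, diffReps, Finset.mem_filter, Finset.mem_product]
      constructor
      · rintro ⟨⟨h1, h2', -, -⟩, he⟩; exact ⟨⟨h1, h2'⟩, he⟩
      · rintro ⟨⟨h1, h2'⟩, he⟩
        refine ⟨⟨h1, h2', ?_, ?_⟩, he⟩
        · intro hne; rw [hne] at he; simp at he
          exact ht.2 he.symm
        · have : (p.1 * p.2⁻¹) ^ 2 = 1 := by rw [he]; exact ht.1
          rw [mul_pow, inv_pow, mul_inv_eq_one] at this
          exact this
    rw [Finset.sum_congr rfl hfib]
    have hval : ∀ t ∈ T, diffReps D t = if t ∈ D then 4 else 8 := by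
      intro t ht
      rw [hTmem] at ht
      obtain ⟨hl, hm⟩ := hlm t ht.2
      by_cases hd : t ∈ D
      · simp [hd, hl hd]
      · simp [hd, hm hd]
    rw [Finset.sum_congr rfl hval, Finset.sum_ite]
    have hTin : (T.filter (fun t => t ∈ D)).card = 4 := by
      rw [← h2]
      congr 1
      ext t
      simp only [Finset.mem_filter, hTmem]
      constructor
      · rintro ⟨⟨hsq, hne⟩, hd⟩
        exact ⟨hd, (hord2 t hd).mp hsq⟩
      · rintro ⟨hd, ho⟩
        exact ⟨⟨(hord2 t hd).mpr ho, fun h1 => hreg.1 (h1 ▸ hd)⟩, hd⟩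
    have hTout : (T.filter (fun t => ¬ t ∈ D)).card = 3 := by
      have := Finset.card_filter_add_card_filter_not
        (s := T) (p := fun t => t ∈ D)
      rw [hTin, g216_invol_card] at this
      omega
    rw [Finset.sum_const, Finset.sum_const, hTin, hTout]
    decide
  -- the "good" pairs
  set P : Finset (G216 × G216) := Q.filter (fun p => ¬ p.1 ^ 2 = 1) with hP
  have hPcard : P.card = 28 := by
    have hbad : Q.filter (fun p => p.1 ^ 2 = 1)
        = (D.filter (fun d => orderOf d = 2)).offDiag := by
      ext p
      simp only [Finset.mem_filter, Finset.mem_offDiag, hQmem]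
      constructor
      · rintro ⟨⟨h1, h2', hne, hsq⟩, hsq1⟩
        exact ⟨⟨h1, (hord2 _ h1).mp hsq1⟩, ⟨h2', (hord2 _ h2').mp (hsq ▸ hsq1)⟩, hne⟩
      · rintro ⟨⟨h1, ho1⟩, ⟨h2', ho2⟩, hne⟩
        have hs1 := (hord2 _ h1).mpr ho1
        have hs2 := (hord2 _ h2').mpr ho2
        exact ⟨⟨h1, h2', hne, hs1.trans hs2.symm⟩, hs1⟩
    have hbadcard : (Q.filter (fun p => p.1 ^ 2 = 1)).card = 12 := by
      rw [hbad, Finset.offDiag_card, h2]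
    have := Finset.card_filter_add_card_filter_not
      (s := Q) (p := fun p => p.1 ^ 2 = 1)
    rw [hbadcard, hQcard] at this
    rw [hP]
    omega
  -- fiberwise decomposition of P over S3
  have hfib2 : ∀ g ∈ S3, P.filter (fun p => p.1 ^ 4 = g)
      = (D.filter (fun d => d ^ 4 = g)).offDiag := by
    intro g hg
    rw [hS3mem] at hg
    have hgne : g ≠ 1 := by intro h; rw [h] at hg; simp at hg
    ext p
    simp only [hP, Finset.mem_filter, Finset.mem_offDiag, hQmem]
    constructor
    · rintro ⟨⟨⟨h1, h2', hne, hsq⟩, -⟩, h4⟩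
      have h4' : p.2 ^ 4 = g := by
        have h44 : p.1 ^ 4 = p.2 ^ 4 := by
          have := congrArg (fun x => x ^ 2) hsq
          simpa [← pow_mul] using this
        rw [← h44, h4]
      exact ⟨⟨h1, h4⟩, ⟨h2', h4'⟩, hne⟩
    · rintro ⟨⟨h1, h41⟩, ⟨h2', h42⟩, hne⟩
      have hsq : p.1 ^ 2 = p.2 ^ 2 := by
        have h4 : (p.1 * p.2⁻¹) ^ 4 = 1 := by
          rw [mul_pow, inv_pow, h41, h42, mul_inv_cancel]
        have := (g216_pow_four _).mp h4
        rw [mul_pow, inv_pow, mul_inv_eq_one] at this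
        exact this
      have hns : ¬ p.1 ^ 2 = 1 := by
        intro h
        apply hgne
        rw [← h41]
        exact (g216_pow_four _).mpr h
      exact ⟨⟨⟨h1, h2', hne, hsq⟩, hns⟩, h41⟩
  have hmap2 : ∀ p ∈ P, p.1 ^ 4 ∈ S3 := by
    intro p hp
    rw [hS3mem]
    simp only [hP, Finset.mem_filter] at hp
    exact hord3 _ hp.2
  calc (∑ g ∈ S3, (D.filter (fun d => d ^ 4 = g)).card *
          ((D.filter (fun d => d ^ 4 = g)).card - 1))
      = ∑ g ∈ S3, (D.filter (fun d => d ^ 4 = g)).offDiag.card := by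
        refine Finset.sum_congr rfl (fun g hg => ?_)
        rw [Finset.offDiag_card, Nat.mul_sub_one]
    _ = ∑ g ∈ S3, (P.filter (fun p => p.1 ^ 4 = g)).card := by
        refine Finset.sum_congr rfl (fun g hg => ?_)
        rw [hfib2 g hg]
    _ = P.card := (Finset.card_eq_sum_card_fiberwise hmap2).symm
    _ = 28 := hPcard
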